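/- For a quasi-graded poset (P, ρ, ζ̄), the ab-index is a coalgebra map: Δ(Ψ(P, ρ, ζ̄)) = Σ_{0̂ < x < 1̂} Ψ([0̂, x], ρ, ζ̄) ⊗ Ψ([x, 1̂], ρ_x, ζ̄), where ρ_x(y) = ρ(y) − ρ(x). -/

import Mathlib

open scoped TensorProduct
open scoped Classical

noncomputable section

abbrev Alg : Type := MonoidAlgebra ℤ (FreeMonoid Bool)

def va : Alg := MonoidAlgebra.of ℤ (FreeMonoid Bool) (FreeMonoid.of false)
def vb : Alg := MonoidAlgebra.of ℤ (FreeMonoid Bool) (FreeMonoid.of true)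

def monoOf (l : List Bool) : Alg := MonoidAlgebra.of ℤ (FreeMonoid Bool) (FreeMonoid.ofList l)

def toF (x : Alg) : FreeMonoid Bool →₀ ℤ := x.coeff

/-- The weight of a chain encoded as a strictly increasing map `f : Fin (k+1) → P`. -/
def wtChain {P : Type} (ρ : P → ℕ) {k : ℕ} (f : Fin (k+1) → P) : Alg :=
  (List.ofFn (fun i : Fin k =>
    (va - vb) ^ (ρ (f i.succ) - ρ (f i.castSucc) - 1) *
      (if (i : ℕ) + 1 < k then vb else 1))).prod

def zetaChain {P : Type} (zb : P → P → ℤ) {k : ℕ} (f : Fin (k+1) → P) : ℤ :=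
  ∏ i : Fin k, zb (f i.castSucc) (f i.succ)

/-- The ab-index of the interval `[lo, hi]` of a quasi-graded poset `(P, ρ, zb)`. -/
def PsiI {P : Type} [Fintype P] [PartialOrder P] (ρ : P → ℕ) (zb : P → P → ℤ)
    (lo hi : P) : Alg :=
  ∑ k ∈ Finset.range (Fintype.card P + 1),
    ∑ f : Fin (k+1) → P,
      if StrictMono f ∧ f 0 = lo ∧ f (Fin.last k) = hi
      then zetaChain zb f • wtChain ρ f else 0

/-- The algebra map `κ` with `κ(a) = a - b`, `κ(b) = 0`. -/
def kappa : Alg →ₐ[ℤ] Alg :=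
  MonoidAlgebra.lift ℤ Alg (FreeMonoid Bool)
    (FreeMonoid.lift (fun s => if s then 0 else va - vb))

/-- The algebra map `λ̄` with `λ̄(a) = 0`, `λ̄(b) = a - b`. -/
def lambdabar : Alg →ₐ[ℤ] Alg :=
  MonoidAlgebra.lift ℤ Alg (FreeMonoid Bool)
    (FreeMonoid.lift (fun s => if s then va - vb else 0))

/-- `η` on monomials: `b^m a^k ↦ 2 (a-b)^(m+k)`, other monomials to `0`. -/
def etaMon (w : FreeMonoid Bool) : Alg :=
  if ∃ m k : ℕ, FreeMonoid.toList w = List.replicate m true ++ List.replicate k false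
  then (2 : ℤ) • (va - vb) ^ (FreeMonoid.toList w).length else 0

def etaOp (x : Alg) : Alg := (toF x).sum fun w c => c • etaMon w

/-- The letter-deletion coproduct on `Z⟨a,b⟩`. -/
def Delta (x : Alg) : Alg ⊗[ℤ] Alg :=
  (toF x).sum fun w c => c •
    ∑ i ∈ Finset.range (FreeMonoid.toList w).length,
      monoOf ((FreeMonoid.toList w).take i) ⊗ₜ[ℤ] monoOf ((FreeMonoid.toList w).drop (i+1))

/-- The Sweedler-style convolution `x ↦ Σ F(x₍₁₎) · b · G(x₍₂₎)`. -/
def sweedler (F G : Alg → Alg) (x : Alg) : Alg :=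
  (toF x).sum fun w c => c •
    ∑ i ∈ Finset.range (FreeMonoid.toList w).length,
      F (monoOf ((FreeMonoid.toList w).take i)) * vb *
        G (monoOf ((FreeMonoid.toList w).drop (i+1)))

/-- `phiAux n = φ_{n+1}`, defined by `φ₁ = κ` and `φ_{k+1}(w) = Σ φ_k(w₍₁₎) · b · η(w₍₂₎)`. -/
def phiAux : ℕ → Alg → Alg
  | 0 => fun x => kappa x
  | (n+1) => fun x => sweedler (phiAux n) etaOp x

def maxLen (x : Alg) : ℕ := (toF x).support.sup fun w => (FreeMonoid.toList w).length

/-- The operator `φ = Σ_{k ≥ 1} φ_k` (the sum is finite on any given polynomial). -/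
def phi (x : Alg) : Alg := ∑ k ∈ Finset.range (maxLen x + 1), phiAux k x

/-- `ω` on a monomial: replace each occurrence of `ab` by `2d` and remaining letters by `c`. -/
def omegaList : List Bool → Alg
  | [] => 1
  | false :: true :: rest => ((2:ℤ) • (va * vb + vb * va)) * omegaList rest
  | _ :: rest => (va + vb) * omegaList rest

def omegaOp (x : Alg) : Alg := (toF x).sum fun w c => c • omegaList (FreeMonoid.toList w)

/-- The operator `G(w) = φ(w)·b + Σ φ(w₍₁₎)·b·λ̄(w₍₂₎)·(a-b)`. -/
def Gop (w : Alg) : Alg := phi w * vb + sweedler phi (fun y => lambdabar y) w * (va - vb)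

/-- The reversal map `u ↦ u*` reading each monomial backwards. -/
def revOp (x : Alg) : Alg :=
  (toF x).sum fun w c =>
    MonoidAlgebra.single (FreeMonoid.ofList (FreeMonoid.toList w).reverse) c

/-- `H'` deletes the last letter of each monomial, `H'(1) = 0`. -/
def Hp (x : Alg) : Alg :=
  (toF x).sum fun w c => if w = 1 then 0 else c • monoOf ((FreeMonoid.toList w).dropLast)

end

noncomputable section

def DeltaT (w : FreeMonoid Bool) : Alg ⊗[ℤ] Alg :=
  ∑ i ∈ Finset.range (FreeMonoid.toList w).length,
      monoOf ((FreeMonoid.toList w).take i) ⊗ₜ[ℤ] monoOf ((FreeMonoid.toList w).drop (i+1))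
def DeltaL : Alg →ₗ[ℤ] (Alg ⊗[ℤ] Alg) :=
  Finsupp.lsum ℤ (fun w => LinearMap.toSpanSingleton ℤ _ (DeltaT w)) ∘ₗ
    (MonoidAlgebra.coeffLinearEquiv ℤ).toLinearMap
lemma Delta_eq (x : Alg) : Delta x = DeltaL x := rfl
lemma Delta_add (x y : Alg) : Delta (x + y) = Delta x + Delta y := by
  simp [Delta_eq, map_add]
lemma Delta_smul (c : ℤ) (x : Alg) : Delta (c • x) = c • Delta x := by
  rw [Delta_eq, Delta_eq, map_smul]
lemma Delta_zero : Delta 0 = 0 := by rw [Delta_eq, map_zero]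
lemma Delta_monoOf (l : List Bool) :
    Delta (monoOf l) = ∑ i ∈ Finset.range l.length,
      monoOf (l.take i) ⊗ₜ[ℤ] monoOf (l.drop (i+1)) := by
  have h : (monoOf l : Alg) = MonoidAlgebra.single (FreeMonoid.ofList l) (1:ℤ) := rfl
  rw [h, Delta_eq]
  show (Finsupp.lsum ℤ (fun w => LinearMap.toSpanSingleton ℤ _ (DeltaT w)))
    (Finsupp.single (FreeMonoid.ofList l) (1:ℤ)) = _
  rw [Finsupp.lsum_single]
  simp [DeltaT, LinearMap.toSpanSingleton_apply]

lemma monoOf_mul (u v : List Bool) : monoOf u * monoOf v = monoOf (u ++ v) := by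
  unfold monoOf; rw [← map_mul]; congr 1
lemma monoOf_nil : monoOf [] = 1 := map_one _
lemma single_eq_smul_monoOf (u : FreeMonoid Bool) (c : ℤ) :
    (MonoidAlgebra.single u c : Alg) = c • monoOf (FreeMonoid.toList u) := by
  have : monoOf (FreeMonoid.toList u) = MonoidAlgebra.single u (1:ℤ) := rfl
  rw [this, MonoidAlgebra.smul_single', mul_one]

lemma Delta_mul_mono (u v : List Bool) :
    Delta (monoOf u * monoOf v)
      = Delta (monoOf u) * (1 ⊗ₜ[ℤ] monoOf v) + (monoOf u ⊗ₜ[ℤ] 1) * Delta (monoOf v) := by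
  rw [monoOf_mul, Delta_monoOf, Delta_monoOf, Delta_monoOf]
  rw [List.length_append, Finset.sum_range_add]
  congr 1
  · rw [Finset.sum_mul]
    refine Finset.sum_congr rfl fun i hi => ?_
    rw [Finset.mem_range] at hi
    rw [Algebra.TensorProduct.tmul_mul_tmul, mul_one,
      List.take_append_of_le_length hi.le, List.drop_append_of_le_length hi, ← monoOf_mul]
  · rw [Finset.mul_sum]
    refine Finset.sum_congr rfl fun i hi => ?_
    rw [Algebra.TensorProduct.tmul_mul_tmul, one_mul,
      List.take_length_add_append i, show u.length + i + 1 = u.length + (i+1) by ring,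
      List.drop_length_add_append (i+1), ← monoOf_mul]

lemma Delta_mul (x y : Alg) :
    Delta (x * y) = Delta x * (1 ⊗ₜ[ℤ] y) + (x ⊗ₜ[ℤ] 1) * Delta y := by
  induction x using MonoidAlgebra.induction_linear generalizing y with
  | zero => simp [Delta_zero]
  | add a b ha hb =>
    rw [add_mul, Delta_add, ha, hb, Delta_add]
    simp only [TensorProduct.add_tmul, add_mul]
    abel
  | single u c =>
    induction y using MonoidAlgebra.induction_linear with
    | zero => simp [Delta_zero]
    | add a b ha hb =>
      rw [mul_add, Delta_add, ha, hb, Delta_add]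
      simp only [TensorProduct.tmul_add, mul_add]
      abel
    | single w d =>
      rw [single_eq_smul_monoOf, single_eq_smul_monoOf, smul_mul_assoc, mul_smul_comm,
        Delta_smul, Delta_smul, Delta_smul, Delta_smul, Delta_mul_mono]
      simp only [smul_add, ← TensorProduct.smul_tmul', TensorProduct.tmul_smul, smul_mul_assoc, mul_smul_comm,
        smul_smul, mul_comm]

lemma Delta_one : Delta 1 = 0 := by
  rw [← monoOf_nil, Delta_monoOf]; simp

lemma Delta_va : Delta va = 1 ⊗ₜ[ℤ] 1 := by
  have : va = monoOf [false] := rfl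
  rw [this, Delta_monoOf]; simp [monoOf_nil]

lemma Delta_vb : Delta vb = 1 ⊗ₜ[ℤ] 1 := by
  have : vb = monoOf [true] := rfl
  rw [this, Delta_monoOf]; simp [monoOf_nil]

lemma Delta_sub (x y : Alg) : Delta (x - y) = Delta x - Delta y := by
  rw [Delta_eq, Delta_eq, Delta_eq, map_sub]

lemma Delta_amb_pow (n : ℕ) : Delta ((va - vb) ^ n) = 0 := by
  induction n with
  | zero => simpa using Delta_one
  | succ n ih =>
    rw [pow_succ, Delta_mul, ih, Delta_sub, Delta_va, Delta_vb]
    simp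

lemma Delta_list_prod (l : List Alg) :
    Delta l.prod = ∑ j ∈ Finset.range l.length,
      ((l.take j).prod ⊗ₜ[ℤ] 1) * Delta (l.getD j 1) * (1 ⊗ₜ[ℤ] (l.drop (j+1)).prod) := by
  induction l with
  | nil => simpa using Delta_one
  | cons a t ih =>
    rw [List.prod_cons, Delta_mul, ih, List.length_cons, Finset.sum_range_succ', add_comm]
    congr 1
    · rw [Finset.mul_sum]
      refine Finset.sum_congr rfl fun j hj => ?_
      rw [Finset.mem_range] at hj
      show (a ⊗ₜ[ℤ] 1) * (((t.take j).prod ⊗ₜ[ℤ] 1) * _ * _) = _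
      rw [← mul_assoc, ← mul_assoc, Algebra.TensorProduct.tmul_mul_tmul, mul_one]
      rfl
    · show Delta a * (1 ⊗ₜ[ℤ] t.prod) = (1 ⊗ₜ[ℤ] 1) * Delta a * (1 ⊗ₜ[ℤ] t.prod)
      rw [show ((1:Alg) ⊗ₜ[ℤ] (1:Alg)) = 1 from rfl, one_mul]

lemma ofFn_take' {α : Type*} {n : ℕ} (F : Fin n → α) (j : ℕ) (hj : j ≤ n) :
    (List.ofFn F).take j = List.ofFn (fun i : Fin j => F ⟨i, lt_of_lt_of_le i.2 hj⟩) := by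
  apply List.ext_getElem
  · simp [Nat.min_eq_left hj]
  · intro i h1 h2
    simp [List.getElem_take, List.getElem_ofFn]

lemma ofFn_drop' {α : Type*} {n : ℕ} (F : Fin n → α) (j : ℕ) :
    (List.ofFn F).drop j = List.ofFn (fun i : Fin (n - j) => F ⟨j + i, by omega⟩) := by
  apply List.ext_getElem
  · simp
  · intro i h1 h2
    simp [List.getElem_drop, List.getElem_ofFn]

lemma Delta_amb_pow_mul_vb (e : ℕ) :
    Delta ((va - vb) ^ e * vb) = ((va - vb) ^ e) ⊗ₜ[ℤ] 1 := by
  rw [Delta_mul, Delta_amb_pow, Delta_vb, zero_mul, zero_add,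
    Algebra.TensorProduct.tmul_mul_tmul, mul_one, one_mul]

def restL {P : Type} {k : ℕ} (f : Fin (k+1) → P) (m : ℕ) : Fin (m+1) → P :=
  fun i => f ⟨min i k, by omega⟩

def restR {P : Type} {k : ℕ} (f : Fin (k+1) → P) (m : ℕ) : Fin (k-m+1) → P :=
  fun i => f ⟨min (m+i) k, by omega⟩

lemma fapp_congr {P : Type} {n : ℕ} (f : Fin n → P) {a b : ℕ} (ha : a < n) (hb : b < n)
    (h : a = b) : f ⟨a, ha⟩ = f ⟨b, hb⟩ := by subst h; rfl

lemma ofFn_congr {α : Type*} {m n : ℕ} (h : m = n) (F : Fin m → α) (G : Fin n → α)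
    (hF : ∀ (i : ℕ) (hi : i < m), F ⟨i, hi⟩ = G ⟨i, h ▸ hi⟩) : List.ofFn F = List.ofFn G := by
  subst h
  congr 1
  funext i
  exact hF i i.2

lemma ofFn_prod_congr {n : ℕ} (F G : Fin n → Alg) (h : ∀ i, F i = G i) :
    (List.ofFn F).prod = (List.ofFn G).prod :=
  congrArg List.prod (congrArg List.ofFn (funext h))

lemma exp_congr {P : Type} {n : ℕ} (ρ : P → ℕ) (f : Fin n → P) {a b c d : ℕ}
    (ha : a < n) (hb : b < n) (hc : c < n) (hd : d < n) (h1 : a = c) (h2 : b = d) :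
    ρ (f ⟨a, ha⟩) - ρ (f ⟨b, hb⟩) - 1 = ρ (f ⟨c, hc⟩) - ρ (f ⟨d, hd⟩) - 1 := by
  subst h1; subst h2; rfl

lemma Delta_wtChain {P : Type} (ρ : P → ℕ) {k : ℕ} (f : Fin (k+1) → P) :
    Delta (wtChain ρ f) = ∑ m ∈ Finset.Ioo 0 k,
      wtChain ρ (restL f m) ⊗ₜ[ℤ] wtChain ρ (restR f m) := by
  obtain _ | K := k
  · simp only [wtChain]
    simp [Delta_one]
  · set F : Fin (K+1) → Alg := fun i =>
      (va - vb) ^ (ρ (f i.succ) - ρ (f i.castSucc) - 1) *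
        (if (i : ℕ) + 1 < K+1 then vb else 1) with hF
    have hwt : wtChain ρ f = (List.ofFn F).prod := rfl
    rw [hwt, Delta_list_prod]
    simp only [List.length_ofFn]
    rw [Finset.sum_range_succ]
    have hlast : (List.ofFn F).getD K 1 = F ⟨K, Nat.lt_succ_self K⟩ := by
      rw [List.getD_eq_getElem _ _ (by simp), List.getElem_ofFn]
    have hlast0 : Delta ((List.ofFn F).getD K 1) = 0 := by
      rw [hlast, hF]
      simp only []
      rw [if_neg (by simp), mul_one, Delta_amb_pow]
    rw [hlast0, mul_zero, zero_mul, add_zero]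
    refine Finset.sum_bij' (i := fun j _ => j + 1) (j := fun m _ => m - 1) ?_ ?_ ?_ ?_ ?_
    · intro j hj
      simp only [Finset.mem_range] at hj
      simp only [Finset.mem_Ioo]
      omega
    · intro m hm
      simp only [Finset.mem_Ioo] at hm
      simp only [Finset.mem_range]
      omega
    · intro j hj
      simp only [Finset.mem_range] at hj
      omega
    · intro m hm
      simp only [Finset.mem_Ioo] at hm
      omega
    · intro j hj
      rw [Finset.mem_range] at hj
      have hget : (List.ofFn F).getD j 1 = F ⟨j, by omega⟩ := by
        rw [List.getD_eq_getElem _ _ (by simp; omega), List.getElem_ofFn]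
      rw [hget, hF]
      simp only []
      rw [if_pos (by simpa using by omega : ((⟨j, by omega⟩ : Fin (K+1)) : ℕ) + 1 < K+1)]
      rw [Delta_amb_pow_mul_vb, Algebra.TensorProduct.tmul_mul_tmul,
        Algebra.TensorProduct.tmul_mul_tmul]
      simp only [mul_one, one_mul]
      congr 1
      · -- A : take part
        show _ = wtChain ρ (restL f (j+1))
        conv_rhs => rw [wtChain, List.ofFn_succ', List.concat_eq_append, List.prod_append,
          List.prod_cons, List.prod_nil, mul_one]
        congr 1
        · rw [ofFn_take' F j (by omega)]
          apply ofFn_prod_congr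
          intro i
          rw [hF]
          simp only [restL, Fin.val_succ, Fin.coe_castSucc, Fin.succ_mk, Fin.castSucc_mk]
          refine congrArg₂ (· * ·) (congrArg (fun e => (va - vb) ^ e) ?_) ?_
          · exact exp_congr ρ f _ _ _ _ (by omega) (by omega)
          · exact if_congr (by omega) rfl rfl
        · simp only [restL, Fin.last, Fin.val_succ, Fin.coe_castSucc, Fin.succ_mk,
            Fin.castSucc_mk]
          rw [if_neg (by omega), mul_one]
          refine congrArg (fun e => (va - vb) ^ e) ?_
          exact exp_congr ρ f _ _ _ _ (by omega) (by omega)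
      · -- B : drop part
        show _ = wtChain ρ (restR f (j+1))
        rw [wtChain, ofFn_drop' F (j+1)]
        apply ofFn_prod_congr
        intro i
        rw [hF]
        simp only [restR, Fin.val_succ, Fin.coe_castSucc, Fin.succ_mk, Fin.castSucc_mk]
        refine congrArg₂ (· * ·) (congrArg (fun e => (va - vb) ^ e) ?_) ?_
        · exact exp_congr ρ f _ _ _ _ (by omega) (by omega)
        · exact if_congr (by omega) rfl rfl

lemma zb_congr {P : Type} {n : ℕ} (zb : P → P → ℤ) (f : Fin n → P) {a b c d : ℕ}
    (ha : a < n) (hb : b < n) (hc : c < n) (hd : d < n) (h1 : a = c) (h2 : b = d) :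
    zb (f ⟨a, ha⟩) (f ⟨b, hb⟩) = zb (f ⟨c, hc⟩) (f ⟨d, hd⟩) := by
  subst h1; subst h2; rfl

lemma zetaChain_split {P : Type} (zb : P → P → ℤ) {k : ℕ} (f : Fin (k+1) → P)
    (m : ℕ) (hm : m ≤ k) :
    zetaChain zb f = zetaChain zb (restL f m) * zetaChain zb (restR f m) := by
  set gnat : ℕ → ℤ := fun i => zb (f ⟨min i k, by omega⟩) (f ⟨min (i+1) k, by omega⟩) with hgnat
  have h1 : zetaChain zb f = ∏ i ∈ Finset.range k, gnat i := by
    rw [zetaChain, ← Fin.prod_univ_eq_prod_range]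
    refine Finset.prod_congr rfl fun i _ => ?_
    simp only [hgnat, Fin.coe_castSucc, Fin.val_succ, Fin.succ, Fin.castSucc, Fin.castAdd,
      Fin.castLE]
    try exact zb_congr zb f _ _ _ _ (by omega) (by omega)
  have h2 : zetaChain zb (restL f m) = ∏ i ∈ Finset.range m, gnat i := by
    rw [zetaChain, ← Fin.prod_univ_eq_prod_range]
    refine Finset.prod_congr rfl fun i _ => ?_
    simp only [hgnat, restL, Fin.coe_castSucc, Fin.val_succ]
    try exact zb_congr zb f _ _ _ _ (by omega) (by omega)
  have h3 : zetaChain zb (restR f m) = ∏ i ∈ Finset.range (k - m), gnat (m + i) := by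
    rw [zetaChain, ← Fin.prod_univ_eq_prod_range]
    refine Finset.prod_congr rfl fun i _ => ?_
    simp only [hgnat, restR, Fin.coe_castSucc, Fin.val_succ]
    try exact zb_congr zb f _ _ _ _ (by omega) (by omega)
  rw [h1, h2, h3]
  have := Finset.prod_range_add gnat m (k - m)
  rw [show m + (k - m) = k from by omega] at this
  exact this

def glue {P : Type} {k1 k2 : ℕ} (g : Fin (k1+1) → P) (h : Fin (k2+1) → P) :
    Fin (k1+k2+1) → P :=
  fun i => if hi : (i : ℕ) < k1 then g ⟨i, by omega⟩ else h ⟨(i : ℕ) - k1, by omega⟩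

lemma glue_eval_lo {P : Type} {k1 k2 : ℕ} (g : Fin (k1+1) → P) (h : Fin (k2+1) → P)
    (hgh : h 0 = g (Fin.last k1)) (i : ℕ) (hi : i < k1+k2+1) (hik : i ≤ k1) :
    glue g h ⟨i, hi⟩ = g ⟨i, by omega⟩ := by
  simp only [glue]
  split_ifs with hcase
  · rfl
  · have hik1 : i = k1 := by omega
    calc h ⟨i - k1, by omega⟩ = h 0 := by congr 1; ext; simp; omega
      _ = g (Fin.last k1) := hgh
      _ = g ⟨i, by omega⟩ := by congr 1; ext; simp [Fin.last]; omega

lemma glue_eval_hi {P : Type} {k1 k2 : ℕ} (g : Fin (k1+1) → P) (h : Fin (k2+1) → P)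
    (i : ℕ) (hi : i < k1+k2+1) (hik : k1 ≤ i) :
    glue g h ⟨i, hi⟩ = h ⟨i - k1, by omega⟩ := by
  simp only [glue]
  split_ifs with hcase
  · omega
  · rfl

lemma glue_strictMono {P : Type} [PartialOrder P] {k1 k2 : ℕ}
    {g : Fin (k1+1) → P} {h : Fin (k2+1) → P}
    (hg : StrictMono g) (hh : StrictMono h) (hgh : h 0 = g (Fin.last k1)) :
    StrictMono (glue g h) := by
  intro i j hij
  obtain ⟨i, hi⟩ := i
  obtain ⟨j, hj⟩ := j
  have hij' : i < j := hij
  rcases le_or_gt j k1 with hbk | hbk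
  · rw [glue_eval_lo g h hgh i hi (by omega), glue_eval_lo g h hgh j hj hbk]
    exact hg (by rw [Fin.mk_lt_mk]; omega)
  · rcases le_or_gt i k1 with hak | hak
    · rw [glue_eval_hi g h j hj (by omega)]
      calc glue g h ⟨i, hi⟩ = g ⟨i, by omega⟩ := glue_eval_lo g h hgh i hi hak
        _ ≤ g (Fin.last k1) := hg.monotone (by rw [Fin.le_def]; simp [Fin.last]; omega)
        _ = h 0 := hgh.symm
        _ < h ⟨j - k1, by omega⟩ := hh (by rw [Fin.lt_def]; simp; omega)
    · rw [glue_eval_hi g h i hi (by omega), glue_eval_hi g h j hj (by omega)]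
      exact hh (by rw [Fin.mk_lt_mk]; omega)

lemma restL_strictMono {P : Type} [PartialOrder P] {k : ℕ} {f : Fin (k+1) → P}
    (hf : StrictMono f) {m : ℕ} (hm : m ≤ k) : StrictMono (restL f m) := by
  intro i j hij
  apply hf
  rw [Fin.mk_lt_mk]
  have hi := i.2
  have hj := j.2
  have := Fin.lt_def.mp hij
  omega

lemma restR_strictMono {P : Type} [PartialOrder P] {k : ℕ} {f : Fin (k+1) → P}
    (hf : StrictMono f) {m : ℕ} (hm : m ≤ k) : StrictMono (restR f m) := by
  intro i j hij
  apply hf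
  rw [Fin.mk_lt_mk]
  have hi := i.2
  have hj := j.2
  have := Fin.lt_def.mp hij
  omega

lemma restL_zero {P : Type} {k : ℕ} (f : Fin (k+1) → P) (m : ℕ) :
    restL f m 0 = f 0 := by
  simp only [restL]
  congr 1

lemma restL_last {P : Type} {k : ℕ} (f : Fin (k+1) → P) (m : ℕ) (hm : m ≤ k) :
    restL f m (Fin.last m) = f ⟨m, by omega⟩ := by
  simp only [restL]
  congr 1
  ext
  simp [Fin.last]
  omega

lemma restR_zero {P : Type} {k : ℕ} (f : Fin (k+1) → P) (m : ℕ) (hm : m ≤ k) :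
    restR f m 0 = f ⟨m, by omega⟩ := by
  simp only [restR]
  congr 1
  ext
  simp
  omega

lemma restR_last {P : Type} {k : ℕ} (f : Fin (k+1) → P) (m : ℕ) (hm : m ≤ k) :
    restR f m (Fin.last (k - m)) = f (Fin.last k) := by
  simp only [restR]
  congr 1
  ext
  simp [Fin.last]
  omega

lemma wtChain_cast {P : Type} (ρ : P → ℕ) {k k' : ℕ} (hkk : k = k')
    (f : Fin (k+1) → P) (f' : Fin (k'+1) → P)
    (hf : ∀ (i : ℕ) (hi : i < k+1), f ⟨i, hi⟩ = f' ⟨i, by omega⟩) :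
    wtChain ρ f = wtChain ρ f' := by
  subst hkk
  have : f = f' := funext fun i => by
    obtain ⟨i, hi⟩ := i
    exact hf i hi
  rw [this]

lemma zetaChain_cast {P : Type} (zb : P → P → ℤ) {k k' : ℕ} (hkk : k = k')
    (f : Fin (k+1) → P) (f' : Fin (k'+1) → P)
    (hf : ∀ (i : ℕ) (hi : i < k+1), f ⟨i, hi⟩ = f' ⟨i, by omega⟩) :
    zetaChain zb f = zetaChain zb f' := by
  subst hkk
  have : f = f' := funext fun i => by
    obtain ⟨i, hi⟩ := i
    exact hf i hi
  rw [this]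

lemma chain_card {P : Type} [Fintype P] [PartialOrder P] {k : ℕ} (f : Fin (k+1) → P)
    (hf : StrictMono f) : k + 1 ≤ Fintype.card P := by
  simpa using Fintype.card_le_of_injective f hf.injective

def hRmap {P : Type} {k1 k2 : ℕ} (f : Fin (k1+k2+1) → P) : Fin (k2+1) → P :=
  fun i => f ⟨min (k1 + ↑i) (k1+k2), by omega⟩

lemma hRmap_eq_restR {P : Type} {k1 k2 : ℕ} (f : Fin (k1+k2+1) → P) :
    ∀ (i : ℕ) (hi : i < (k1+k2-k1)+1), restR f k1 ⟨i, hi⟩ = hRmap f ⟨i, by omega⟩ := by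
  intro i hi
  rfl

lemma inner_bij {P : Type} [Fintype P] [PartialOrder P] [BoundedOrder P]
    (ρ : P → ℕ) (zb : P → P → ℤ) (k1 k2 : ℕ) (h1 : 1 ≤ k1) (h2 : 1 ≤ k2) :
    (∑ f : Fin (k1+k2+1) → P,
      if StrictMono f ∧ f 0 = ⊥ ∧ f (Fin.last (k1+k2)) = ⊤ then
        (zetaChain zb (restL f k1) * zetaChain zb (restR f k1)) •
          (wtChain ρ (restL f k1) ⊗ₜ[ℤ] wtChain ρ (restR f k1)) else 0)
    = ∑ g : Fin (k1+1) → P, ∑ h : Fin (k2+1) → P,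
        if StrictMono g ∧ g 0 = ⊥ ∧ StrictMono h ∧ h (Fin.last k2) = ⊤ ∧
            h 0 = g (Fin.last k1) ∧ ⊥ < g (Fin.last k1) ∧ g (Fin.last k1) < ⊤ then
          (zetaChain zb g * zetaChain zb h) • (wtChain ρ g ⊗ₜ[ℤ] wtChain ρ h) else 0 := by
  rw [← Finset.sum_product']
  rw [← Finset.sum_filter, ← Finset.sum_filter]
  have hcast : k1 + k2 - k1 = k2 := by omega
  refine Finset.sum_nbij' (i := fun f => (restL f k1, hRmap f))
    (j := fun q => glue q.1 q.2) ?_ ?_ ?_ ?_ ?_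
  · -- maps to
    intro f hf
    simp only [Finset.mem_filter, Finset.mem_univ, Finset.mem_product, true_and, and_self] at hf ⊢
    obtain ⟨hSM, h0, hlast⟩ := hf
    have hbot : restL f k1 0 = ⊥ := by rw [restL_zero]; exact h0
    have hglast : restL f k1 (Fin.last k1) = f ⟨k1, by omega⟩ := restL_last f k1 (by omega)
    refine ⟨restL_strictMono hSM (by omega), hbot, ?_, ?_, ?_, ?_, ?_⟩
    · intro i j hij
      apply hSM
      rw [Fin.mk_lt_mk]
      have := i.2; have := j.2
      have := Fin.lt_def.mp hij
      omega
    · show f ⟨min (k1 + (Fin.last k2 : ℕ)) (k1+k2), _⟩ = ⊤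
      rw [← hlast]
      congr 1
      ext
      simp [Fin.last]
    · show f ⟨min (k1 + ((0 : Fin (k2+1)) : ℕ)) (k1+k2), _⟩ = _
      rw [hglast]
      congr 1
      ext
      simp
      try omega
    · rw [hglast, ← h0]
      apply hSM
      rw [Fin.lt_def]
      simp
      omega
    · rw [hglast, ← hlast]
      apply hSM
      rw [Fin.lt_def]
      simp [Fin.last]
      omega
  · -- reverse maps to
    intro q hq
    simp only [Finset.mem_filter, Finset.mem_univ, Finset.mem_product, true_and, and_self] at hq ⊢
    obtain ⟨hSMg, hg0, hSMh, hhl, hgh, _, _⟩ := hq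
    refine ⟨glue_strictMono hSMg hSMh hgh, ?_, ?_⟩
    · have h0' : (0 : Fin (k1+k2+1)) = ⟨0, by omega⟩ := rfl
      have h00 : (⟨0, by omega⟩ : Fin (k1+1)) = 0 := by ext; simp
      rw [h0', glue_eval_lo _ _ hgh 0 (by omega) (by omega), h00, hg0]
    · have : (Fin.last (k1+k2)) = ⟨k1+k2, by omega⟩ := rfl
      rw [this, glue_eval_hi _ _ (k1+k2) (by omega) (by omega)]
      have hlk : (⟨k1+k2-k1, by omega⟩ : Fin (k2+1)) = Fin.last k2 := by
        ext; simp [Fin.last]; try omega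
      rw [hlk, hhl]
  · -- left inverse
    intro f hf
    simp only [Finset.mem_filter, Finset.mem_univ, true_and] at hf
    dsimp only
    have hgh : hRmap f 0 = restL f k1 (Fin.last k1) := by
      rw [restL_last f k1 (by omega)]
      show f ⟨min (k1 + ((0 : Fin (k2+1)) : ℕ)) (k1+k2), _⟩ = _
      congr 1
      ext
      simp
      try omega
    funext i
    obtain ⟨i, hi⟩ := i
    rcases le_or_gt i k1 with hik | hik
    · rw [glue_eval_lo _ _ hgh i hi hik]
      show f ⟨min i (k1+k2), _⟩ = f ⟨i, hi⟩
      exact fapp_congr f _ _ (by omega)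
    · rw [glue_eval_hi _ _ i hi (by omega)]
      show f ⟨min (k1 + (i - k1)) (k1+k2), _⟩ = f ⟨i, hi⟩
      exact fapp_congr f _ _ (by omega)
  · -- right inverse
    intro q hq
    simp only [Finset.mem_filter, Finset.mem_univ, Finset.mem_product, true_and, and_self] at hq
    obtain ⟨hSMg, hg0, hSMh, hhl, hgh, _, _⟩ := hq
    obtain ⟨g, h⟩ := q
    dsimp only at hgh ⊢
    refine Prod.ext ?_ ?_
    · dsimp only
      funext i
      obtain ⟨i, hi⟩ := i
      show glue g h ⟨min i (k1+k2), _⟩ = g ⟨i, hi⟩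
      have hmin : (⟨min i (k1+k2), by omega⟩ : Fin (k1+k2+1)) = ⟨i, by omega⟩ := by
        ext; simp; omega
      rw [hmin, glue_eval_lo g h hgh i (by omega) (by omega)]
    · dsimp only
      funext i
      obtain ⟨i, hi⟩ := i
      show glue g h ⟨min (k1 + i) (k1+k2), _⟩ = h ⟨i, hi⟩
      have hmin : (⟨min (k1+i) (k1+k2), by omega⟩ : Fin (k1+k2+1)) = ⟨k1+i, by omega⟩ := by
        ext; simp; omega
      rw [hmin, glue_eval_hi g h (k1+i) (by omega) (by omega)]
      congr 1
      ext
      simp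
  · -- terms
    intro f hf
    dsimp only
    rw [zetaChain_cast zb hcast (restR f k1) (hRmap f) (hRmap_eq_restR f),
      wtChain_cast ρ hcast (restR f k1) (hRmap f) (hRmap_eq_restR f)]

lemma Delta_sum {ι : Type*} (s : Finset ι) (F : ι → Alg) :
    Delta (∑ i ∈ s, F i) = ∑ i ∈ s, Delta (F i) := by
  simp only [Delta_eq]
  exact map_sum DeltaL F s

def Aterm {P : Type} [Fintype P] [PartialOrder P] [BoundedOrder P]
    (ρ : P → ℕ) (zb : P → P → ℤ) (k m : ℕ) : Alg ⊗[ℤ] Alg :=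
  ∑ f : Fin (k+1) → P,
    if StrictMono f ∧ f 0 = ⊥ ∧ f (Fin.last k) = ⊤ then
      (zetaChain zb (restL f m) * zetaChain zb (restR f m)) •
        (wtChain ρ (restL f m) ⊗ₜ[ℤ] wtChain ρ (restR f m)) else 0

def Bterm {P : Type} [Fintype P] [PartialOrder P] [BoundedOrder P]
    (ρ : P → ℕ) (zb : P → P → ℤ) (k1 k2 : ℕ) : Alg ⊗[ℤ] Alg :=
  ∑ g : Fin (k1+1) → P, ∑ h : Fin (k2+1) → P,
    if StrictMono g ∧ g 0 = ⊥ ∧ StrictMono h ∧ h (Fin.last k2) = ⊤ ∧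
        h 0 = g (Fin.last k1) ∧ ⊥ < g (Fin.last k1) ∧ g (Fin.last k1) < ⊤ then
      (zetaChain zb g * zetaChain zb h) • (wtChain ρ g ⊗ₜ[ℤ] wtChain ρ h) else 0

-- step 1 : Delta of PsiI
lemma Delta_PsiI {P : Type} [Fintype P] [PartialOrder P] [BoundedOrder P]
    (ρ : P → ℕ) (zb : P → P → ℤ) :
    Delta (PsiI ρ zb (⊥ : P) ⊤)
      = ∑ k ∈ Finset.range (Fintype.card P + 1), ∑ m ∈ Finset.Ioo 0 k,
          Aterm ρ zb k m := by
  rw [PsiI, Delta_sum]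
  refine Finset.sum_congr rfl fun k hk => ?_
  rw [Delta_sum]
  unfold Aterm
  conv_rhs => rw [Finset.sum_comm]
  refine Finset.sum_congr rfl fun f _ => ?_
  by_cases hc : StrictMono f ∧ f 0 = (⊥ : P) ∧ f (Fin.last k) = ⊤
  · rw [if_pos hc, Delta_smul, Delta_wtChain, Finset.smul_sum]
    refine Finset.sum_congr rfl fun m hm => ?_
    rw [Finset.mem_Ioo] at hm
    rw [if_pos hc, zetaChain_split zb f m (by omega)]
  · rw [if_neg hc, Delta_zero]
    exact (Finset.sum_eq_zero fun m _ => by rw [if_neg hc]).symm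

lemma A_reindex {P : Type} [Fintype P] [PartialOrder P] [BoundedOrder P]
    (ρ : P → ℕ) (zb : P → P → ℤ) :
    ∑ k ∈ Finset.range (Fintype.card P + 1), ∑ m ∈ Finset.Ioo 0 k, Aterm ρ zb k m
      = ∑ p ∈ (Finset.range (Fintype.card P + 1) ×ˢ Finset.range (Fintype.card P + 1)).filter
          (fun p => 1 ≤ p.1 ∧ 1 ≤ p.2 ∧ p.1 + p.2 ≤ Fintype.card P),
          Aterm ρ zb (p.1 + p.2) p.1 := by
  set N := Fintype.card P
  have h1 : ∀ k ∈ Finset.range (N + 1), (∑ m ∈ Finset.Ioo 0 k, Aterm ρ zb k m)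
      = ∑ m ∈ Finset.range (N+1), if 0 < m ∧ m < k then Aterm ρ zb k m else 0 := by
    intro k hk
    rw [Finset.mem_range] at hk
    rw [← Finset.sum_filter]
    refine Finset.sum_congr ?_ fun _ _ => rfl
    ext m
    simp only [Finset.mem_Ioo, Finset.mem_filter, Finset.mem_range]
    omega
  rw [Finset.sum_congr rfl h1, ← Finset.sum_product', ← Finset.sum_filter]
  refine Finset.sum_nbij' (i := fun p => (p.2, p.1 - p.2)) (j := fun q => (q.1 + q.2, q.1))
    ?_ ?_ ?_ ?_ ?_
  · intro p hp
    simp only [Finset.mem_filter, Finset.mem_product, Finset.mem_range] at hp ⊢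
    omega
  · intro q hq
    simp only [Finset.mem_filter, Finset.mem_product, Finset.mem_range] at hq ⊢
    omega
  · intro p hp
    simp only [Finset.mem_filter, Finset.mem_product, Finset.mem_range] at hp
    obtain ⟨a, b⟩ := p
    show ((b + (a - b), b) : ℕ × ℕ) = (a, b)
    rw [Nat.add_sub_cancel' (by omega : b ≤ a)]
  · intro q hq
    simp only [Finset.mem_filter, Finset.mem_product, Finset.mem_range] at hq
    obtain ⟨a, b⟩ := q
    show ((a, a + b - a) : ℕ × ℕ) = (a, b)
    rw [Nat.add_sub_cancel_left]
  · intro p hp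
    simp only [Finset.mem_filter, Finset.mem_product, Finset.mem_range] at hp
    dsimp only
    rw [Nat.add_sub_cancel' (by omega : p.2 ≤ p.1)]

lemma Bterm_eq_Aterm {P : Type} [Fintype P] [PartialOrder P] [BoundedOrder P]
    (ρ : P → ℕ) (zb : P → P → ℤ) (k1 k2 : ℕ) (h1 : 1 ≤ k1) (h2 : 1 ≤ k2) :
    Bterm ρ zb k1 k2 = Aterm ρ zb (k1 + k2) k1 :=
  (inner_bij ρ zb k1 k2 h1 h2).symm

lemma Bterm_zero {P : Type} [Fintype P] [PartialOrder P] [BoundedOrder P]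
    (ρ : P → ℕ) (zb : P → P → ℤ) (k1 k2 : ℕ)
    (hbad : ¬(1 ≤ k1 ∧ 1 ≤ k2 ∧ k1 + k2 ≤ Fintype.card P)) :
    Bterm ρ zb k1 k2 = 0 := by
  rw [Bterm]
  refine Finset.sum_eq_zero fun g _ => Finset.sum_eq_zero fun h _ => ?_
  rw [if_neg]
  rintro ⟨hSMg, hg0, hSMh, hhl, hgh, hb1, hb2⟩
  apply hbad
  have hk1 : 1 ≤ k1 := by
    by_contra hx
    have : k1 = 0 := by omega
    subst this
    rw [show (Fin.last 0) = 0 from rfl, hg0] at hb1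
    exact lt_irrefl _ hb1
  have hk2 : 1 ≤ k2 := by
    by_contra hx
    have : k2 = 0 := by omega
    subst this
    rw [show (Fin.last 0) = 0 from rfl, hgh] at hhl
    rw [hhl] at hb2
    exact lt_irrefl _ hb2
  have := chain_card (glue g h) (glue_strictMono hSMg hSMh hgh)
  exact ⟨hk1, hk2, by omega⟩

lemma B_sum {P : Type} [Fintype P] [PartialOrder P] [BoundedOrder P]
    (ρ : P → ℕ) (zb : P → P → ℤ) :
    ∑ k1 ∈ Finset.range (Fintype.card P + 1), ∑ k2 ∈ Finset.range (Fintype.card P + 1),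
        Bterm ρ zb k1 k2
      = ∑ p ∈ (Finset.range (Fintype.card P + 1) ×ˢ Finset.range (Fintype.card P + 1)).filter
          (fun p => 1 ≤ p.1 ∧ 1 ≤ p.2 ∧ p.1 + p.2 ≤ Fintype.card P),
          Aterm ρ zb (p.1 + p.2) p.1 := by
  rw [← Finset.sum_product']
  rw [← Finset.sum_filter_add_sum_filter_not _
    (fun p => 1 ≤ p.1 ∧ 1 ≤ p.2 ∧ p.1 + p.2 ≤ Fintype.card P)]
  have hz : ∑ p ∈ (Finset.range (Fintype.card P + 1) ×ˢ Finset.range (Fintype.card P + 1)).filter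
      (fun p => ¬(1 ≤ p.1 ∧ 1 ≤ p.2 ∧ p.1 + p.2 ≤ Fintype.card P)), Bterm ρ zb p.1 p.2 = 0 :=
    Finset.sum_eq_zero fun p hp =>
      Bterm_zero ρ zb p.1 p.2 (Finset.mem_filter.mp hp).2
  rw [hz, add_zero]
  refine Finset.sum_congr rfl fun p hp => ?_
  have hp' := (Finset.mem_filter.mp hp).2
  exact Bterm_eq_Aterm ρ zb p.1 p.2 hp'.1 hp'.2.1

lemma x_collapse {P : Type} [Fintype P] [PartialOrder P] [BoundedOrder P] {k1 k2 : ℕ}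
    (g : Fin (k1+1) → P) (h : Fin (k2+1) → P) (v : Alg ⊗[ℤ] Alg) :
    (∑ x ∈ Finset.univ.filter (fun x : P => ⊥ < x ∧ x < ⊤),
      if (StrictMono g ∧ g 0 = ⊥ ∧ g (Fin.last k1) = x) ∧
          (StrictMono h ∧ h 0 = x ∧ h (Fin.last k2) = ⊤) then v else 0)
    = if StrictMono g ∧ g 0 = ⊥ ∧ StrictMono h ∧ h (Fin.last k2) = ⊤ ∧
          h 0 = g (Fin.last k1) ∧ ⊥ < g (Fin.last k1) ∧ g (Fin.last k1) < ⊤ then v else 0 := by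
  by_cases hM : StrictMono g ∧ g 0 = ⊥ ∧ StrictMono h ∧ h (Fin.last k2) = ⊤ ∧
      h 0 = g (Fin.last k1) ∧ ⊥ < g (Fin.last k1) ∧ g (Fin.last k1) < ⊤
  · rw [if_pos hM]
    obtain ⟨h1, h2, h3, h4, h5, h6, h7⟩ := hM
    rw [Finset.sum_eq_single_of_mem (g (Fin.last k1))
      (Finset.mem_filter.mpr ⟨Finset.mem_univ _, h6, h7⟩)]
    · rw [if_pos ⟨⟨h1, h2, rfl⟩, ⟨h3, h5, h4⟩⟩]
    · intro x hx hne
      rw [if_neg]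
      rintro ⟨⟨-, -, hgl⟩, -⟩
      exact hne hgl.symm
  · rw [if_neg hM]
    refine Finset.sum_eq_zero fun x hx => ?_
    rw [if_neg]
    rintro ⟨⟨h1, h2, h3⟩, ⟨h4, h5, h6⟩⟩
    subst h3
    exact hM ⟨h1, h2, h4, h6, h5, (Finset.mem_filter.mp hx).2⟩

lemma RHS_eq_Bsum {P : Type} [Fintype P] [PartialOrder P] [BoundedOrder P]
    (ρ : P → ℕ) (zb : P → P → ℤ) :
    (∑ x ∈ Finset.univ.filter (fun x : P => ⊥ < x ∧ x < ⊤),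
        PsiI ρ zb ⊥ x ⊗ₜ[ℤ] PsiI ρ zb x ⊤)
      = ∑ k1 ∈ Finset.range (Fintype.card P + 1), ∑ k2 ∈ Finset.range (Fintype.card P + 1),
          Bterm ρ zb k1 k2 := by
  have e1 : ∀ x : P, PsiI ρ zb ⊥ x ⊗ₜ[ℤ] PsiI ρ zb x ⊤
      = ∑ k1 ∈ Finset.range (Fintype.card P + 1), ∑ g : Fin (k1+1) → P,
          ∑ k2 ∈ Finset.range (Fintype.card P + 1), ∑ h : Fin (k2+1) → P,
            if (StrictMono g ∧ g 0 = ⊥ ∧ g (Fin.last k1) = x) ∧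
                (StrictMono h ∧ h 0 = x ∧ h (Fin.last k2) = ⊤) then
              (zetaChain zb g * zetaChain zb h) • (wtChain ρ g ⊗ₜ[ℤ] wtChain ρ h) else 0 := by
    intro x
    rw [PsiI, PsiI, TensorProduct.sum_tmul]
    refine Finset.sum_congr rfl fun k1 _ => ?_
    rw [TensorProduct.sum_tmul]
    refine Finset.sum_congr rfl fun g _ => ?_
    rw [TensorProduct.tmul_sum]
    refine Finset.sum_congr rfl fun k2 _ => ?_
    rw [TensorProduct.tmul_sum]
    refine Finset.sum_congr rfl fun h _ => ?_
    by_cases hc1 : StrictMono g ∧ g 0 = ⊥ ∧ g (Fin.last k1) = x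
    · by_cases hc2 : StrictMono h ∧ h 0 = x ∧ h (Fin.last k2) = ⊤
      · rw [if_pos hc1, if_pos hc2, if_pos ⟨hc1, hc2⟩, ← TensorProduct.smul_tmul',
          TensorProduct.tmul_smul, smul_smul]
      · rw [if_neg hc2, TensorProduct.tmul_zero]
        exact (if_neg (fun hcc => hc2 hcc.2)).symm
    · rw [if_neg hc1, TensorProduct.zero_tmul]
      exact (if_neg (fun hcc => hc1 hcc.1)).symm
  rw [Finset.sum_congr rfl fun x _ => e1 x]
  rw [Finset.sum_comm]
  refine Finset.sum_congr rfl fun k1 _ => ?_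
  rw [Finset.sum_comm]
  refine Eq.trans (Finset.sum_congr rfl fun g _ => ?_) (Finset.sum_comm ..)
  rw [Finset.sum_comm]
  refine Finset.sum_congr rfl fun k2 _ => ?_
  rw [Finset.sum_comm]
  refine Finset.sum_congr rfl fun h _ => ?_
  exact x_collapse g h _


end

/-- the ab-index of a quasi-graded poset is a coalgebra map:
`Δ(Ψ(P)) = Σ_{0̂ < x < 1̂} Ψ([0̂,x]) ⊗ Ψ([x,1̂])`. -/
theorem abIndex_coalgebra_map {P : Type} [Fintype P] [PartialOrder P] [BoundedOrder P]
    (ρ : P → ℕ) (zb : P → P → ℤ) (hρ0 : ρ ⊥ = 0) (hρ : StrictMono ρ)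
    (hzb : ∀ x : P, zb x x = 1) :
    Delta (PsiI ρ zb ⊥ ⊤)
      = ∑ x ∈ Finset.univ.filter (fun x : P => ⊥ < x ∧ x < ⊤),
          PsiI ρ zb ⊥ x ⊗ₜ[ℤ] PsiI ρ zb x ⊤ := by
  rw [Delta_PsiI, A_reindex, ← B_sum, RHS_eq_Bsum]
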